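/- Let Z = {z ∈ {0,1}^d : z_d ≤ Σ_{i∈[d−1]} z_i} with d ≥ 2, and let Δ₁ = {(w, z) ∈ {0,1} × Z : w ≤ Σ_{i∈[d]} z_i}. Then conv(Δ₁) = {(w, z) ∈ [0,1]^{1+d} : w ≤ Σ_{i∈[d−1]} z_i and z_d ≤ Σ_{i∈[d−1]} z_i}. -/

import Mathlib

open Finset Set

namespace Delta1Aux

variable {d : ℕ}

/-- The polytope `P`. -/
def P (k : Fin d) : Set (ℝ × (Fin d → ℝ)) :=
  {q | q.1 ∈ Set.Icc (0 : ℝ) 1 ∧ (∀ i, q.2 i ∈ Set.Icc (0 : ℝ) 1) ∧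
      q.1 ≤ (∑ i ∈ Finset.univ.erase k, q.2 i) ∧
      q.2 k ≤ ∑ i ∈ Finset.univ.erase k, q.2 i}

/-- The integral point set `S`. -/
def S (k : Fin d) : Set (ℝ × (Fin d → ℝ)) :=
  {q | (q.1 = 0 ∨ q.1 = 1) ∧
      ((∀ i, q.2 i = 0 ∨ q.2 i = 1) ∧
        q.2 k ≤ ∑ i ∈ Finset.univ.erase k, q.2 i) ∧
      q.1 ≤ ∑ i, q.2 i}

lemma sum01_nat {ι : Type*} {A : Finset ι} {f : ι → ℝ} (h : ∀ i ∈ A, f i = 0 ∨ f i = 1) :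
    ∃ n : ℕ, ∑ i ∈ A, f i = n := by
  classical
  induction A using Finset.induction_on with
  | empty => exact ⟨0, by simp⟩
  | insert a s hni ih =>
      obtain ⟨n, hn⟩ := ih fun i hi => h i (Finset.mem_insert_of_mem hi)
      rcases h a (Finset.mem_insert_self a s) with h0 | h1
      · exact ⟨n, by rw [Finset.sum_insert hni, h0, hn, zero_add]⟩
      · exact ⟨n + 1, by rw [Finset.sum_insert hni, h1, hn]; push_cast; ring⟩

lemma S_subset_P (k : Fin d) : S k ⊆ P k := by
  rintro q ⟨hy, ⟨hx, hts⟩, hysum⟩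
  have hx' : ∀ i, q.2 i ∈ Set.Icc (0 : ℝ) 1 := by
    intro i; rcases hx i with h | h <;> simp [h]
  have hy' : q.1 ∈ Set.Icc (0 : ℝ) 1 := by
    rcases hy with h | h <;> simp [h]
  refine ⟨hy', hx', ?_, hts⟩
  rcases hy with h0 | h1
  · rw [h0]
    exact Finset.sum_nonneg fun i _ => (hx' i).1
  · -- q.1 = 1; show the partial sum is ≥ 1
    by_contra hlt
    push_neg at hlt
    have hall : ∀ i ∈ Finset.univ.erase k, q.2 i = 0 := by
      intro i hi
      rcases hx i with h | h
      · exact h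
      · exfalso
        have : (1 : ℝ) ≤ ∑ j ∈ Finset.univ.erase k, q.2 j := by
          calc (1 : ℝ) = q.2 i := h.symm
          _ ≤ _ := Finset.single_le_sum (fun j _ => (hx' j).1) hi
        linarith [hlt, h1]
    have hs0 : ∑ i ∈ Finset.univ.erase k, q.2 i = 0 := Finset.sum_eq_zero hall
    have htk : q.2 k = 0 := le_antisymm (by rw [← hs0]; exact hts) (hx' k).1
    have : ∑ i, q.2 i = 0 := by
      rw [← Finset.sum_erase_add _ _ (Finset.mem_univ k), hs0, htk, zero_add]
    rw [h1] at hysum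
    linarith [this ▸ hysum]

lemma finite_S (k : Fin d) : (S k).Finite := by
  have : S k ⊆ ({0, 1} : Set ℝ) ×ˢ (Set.pi Set.univ fun _ : Fin d => ({0, 1} : Set ℝ)) := by
    rintro q ⟨hy, ⟨hx, -⟩, -⟩
    refine ⟨by simpa using hy, fun i _ => by simpa using hx i⟩
  exact Set.Finite.subset (Set.Finite.prod ((Set.finite_singleton _).insert _)
    (Set.Finite.pi fun _ => (Set.finite_singleton _).insert _)) this

lemma convex_P (k : Fin d) : Convex ℝ (P k) := by
  rintro q hq r hr a b ha hb hab
  obtain ⟨hq1, hq2, hq3, hq4⟩ := hq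
  obtain ⟨hr1, hr2, hr3, hr4⟩ := hr
  have hfst : (a • q + b • r).1 = a * q.1 + b * r.1 := rfl
  have hsnd : ∀ i, (a • q + b • r).2 i = a * q.2 i + b * r.2 i := fun i => rfl
  have hsum : ∀ (A : Finset (Fin d)), ∑ i ∈ A, (a • q + b • r).2 i
      = a * (∑ i ∈ A, q.2 i) + b * (∑ i ∈ A, r.2 i) := by
    intro A
    simp only [hsnd, Finset.sum_add_distrib, Finset.mul_sum]
  refine ⟨?_, ?_, ?_, ?_⟩
  · rw [hfst]; constructor <;> nlinarith [hq1.1, hq1.2, hr1.1, hr1.2]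
  · intro i; rw [hsnd]
    constructor <;> nlinarith [(hq2 i).1, (hq2 i).2, (hr2 i).1, (hr2 i).2]
  · rw [hfst, hsum]
    exact add_le_add (mul_le_mul_of_nonneg_left hq3 ha) (mul_le_mul_of_nonneg_left hr3 hb)
  · rw [hsnd, hsum]
    exact add_le_add (mul_le_mul_of_nonneg_left hq4 ha) (mul_le_mul_of_nonneg_left hr4 hb)

lemma compact_P (k : Fin d) : IsCompact (P k) := by
  have hclosed : IsClosed (P k) := by
    have h1 : IsClosed {q : ℝ × (Fin d → ℝ) | q.1 ∈ Set.Icc (0:ℝ) 1} :=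
      isClosed_Icc.preimage continuous_fst
    have h2 : IsClosed {q : ℝ × (Fin d → ℝ) | ∀ i, q.2 i ∈ Set.Icc (0:ℝ) 1} := by
      rw [Set.setOf_forall]
      exact isClosed_iInter fun i =>
        isClosed_Icc.preimage ((continuous_apply i).comp continuous_snd)
    have hsum : Continuous fun q : ℝ × (Fin d → ℝ) => ∑ i ∈ Finset.univ.erase k, q.2 i :=
      continuous_finset_sum _ fun i _ => (continuous_apply i).comp continuous_snd
    have h3 : IsClosed {q : ℝ × (Fin d → ℝ) |
        q.1 ≤ ∑ i ∈ Finset.univ.erase k, q.2 i} := isClosed_le continuous_fst hsum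
    have h4 : IsClosed {q : ℝ × (Fin d → ℝ) |
        q.2 k ≤ ∑ i ∈ Finset.univ.erase k, q.2 i} :=
      isClosed_le ((continuous_apply k).comp continuous_snd) hsum
    exact h1.inter (h2.inter (h3.inter h4))
  refine IsCompact.of_isClosed_subset (isCompact_Icc (a := ((0:ℝ), (0 : Fin d → ℝ)))
    (b := ((1:ℝ), (1 : Fin d → ℝ)))) hclosed ?_
  rintro q ⟨h1, h2, -, -⟩
  refine ⟨⟨h1.1, fun i => (h2 i).1⟩, ⟨h1.2, fun i => (h2 i).2⟩⟩


lemma extreme_zero {A : Set (ℝ × (Fin d → ℝ))} {q v : ℝ × (Fin d → ℝ)}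
    (hq : q ∈ A.extremePoints ℝ) (h₁ : q + v ∈ A) (h₂ : q - v ∈ A) : v = 0 := by
  have h := hq.2 h₁ h₂
    (⟨1/2, 1/2, by norm_num, by norm_num, by norm_num, by module⟩ :
      q ∈ openSegment ℝ (q + v) (q - v))
  have hv : v = (q + v) - q := by abel
  rw [h, sub_self] at hv
  exact hv

lemma update_apply' (i k : Fin d) (bi bk : ℝ) (m : Fin d) :
    Function.update (Function.update (0 : Fin d → ℝ) i bi) k bk m
      = if m = k then bk else if m = i then bi else 0 := by
  rw [Function.update_apply, Function.update_apply]
  simp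

lemma update_neg (i k : Fin d) (bi bk : ℝ) :
    Function.update (Function.update (0 : Fin d → ℝ) i (-bi)) k (-bk)
      = - Function.update (Function.update (0 : Fin d → ℝ) i bi) k bk := by
  funext m
  simp only [Pi.neg_apply, update_apply']
  split_ifs <;> simp

lemma sum_update_pair {k i : Fin d} (hik : i ≠ k) (bi bk : ℝ) (f : Fin d → ℝ) :
    ∑ m ∈ Finset.univ.erase k,
        (f m + Function.update (Function.update (0 : Fin d → ℝ) i bi) k bk m)
      = (∑ m ∈ Finset.univ.erase k, f m) + bi := by
  rw [Finset.sum_add_distrib]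
  congr 1
  rw [Finset.sum_congr rfl (fun m hm => ?_), Finset.sum_ite_eq' (Finset.univ.erase k) i
    (fun _ => bi)]
  · simp [Finset.mem_erase, hik]
  · rw [update_apply', if_neg (Finset.mem_erase.mp hm).1]

/-- Membership in `P k` after perturbing the first coordinate by `a`,
coordinate `i ≠ k` by `bi` and coordinate `k` by `bk`. -/
lemma mem_P_add {k i : Fin d} (hik : i ≠ k) {q : ℝ × (Fin d → ℝ)} (hq : q ∈ P k)
    (a bi bk : ℝ)
    (h1 : 0 ≤ q.1 + a) (h2 : q.1 + a ≤ 1)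
    (h3 : 0 ≤ q.2 i + bi) (h4 : q.2 i + bi ≤ 1)
    (h5 : 0 ≤ q.2 k + bk) (h6 : q.2 k + bk ≤ 1)
    (h7 : q.1 + a ≤ (∑ m ∈ Finset.univ.erase k, q.2 m) + bi)
    (h8 : q.2 k + bk ≤ (∑ m ∈ Finset.univ.erase k, q.2 m) + bi) :
    q + (a, Function.update (Function.update (0 : Fin d → ℝ) i bi) k bk) ∈ P k := by
  obtain ⟨-, hbox, -, -⟩ := hq
  set w := Function.update (Function.update (0 : Fin d → ℝ) i bi) k bk with hw
  have hfst : (q + (a, w)).1 = q.1 + a := rfl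
  have hsnd : ∀ m, (q + (a, w)).2 m = q.2 m + w m := fun m => rfl
  have hsum : ∑ m ∈ Finset.univ.erase k, (q + (a, w)).2 m
      = (∑ m ∈ Finset.univ.erase k, q.2 m) + bi := by
    simp only [hsnd]; exact sum_update_pair hik bi bk q.2
  refine ⟨⟨by rw [hfst]; exact h1, by rw [hfst]; exact h2⟩, ?_, ?_, ?_⟩
  · intro m
    rw [hsnd, hw]
    rcases eq_or_ne m k with rfl | hmk
    · rw [update_apply', if_pos rfl]; exact ⟨h5, h6⟩
    · rcases eq_or_ne m i with rfl | hmi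
      · rw [update_apply', if_neg hmk, if_pos rfl]; exact ⟨h3, h4⟩
      · rw [update_apply', if_neg hmk, if_neg hmi, add_zero]; exact hbox m
  · rw [hfst, hsum]; exact h7
  · rw [hsum, hsnd, hw, update_apply', if_pos rfl]; exact h8

/-- The two-coordinate (both ≠ k) balanced perturbation. -/
lemma mem_P_add2 {k i j : Fin d} (hik : i ≠ k) (hjk : j ≠ k) (hij : i ≠ j)
    {q : ℝ × (Fin d → ℝ)} (hq : q ∈ P k) (ε : ℝ)
    (h3 : 0 ≤ q.2 i + ε) (h4 : q.2 i + ε ≤ 1)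
    (h5 : 0 ≤ q.2 j - ε) (h6 : q.2 j - ε ≤ 1) :
    q + ((0:ℝ), Function.update (Function.update (0 : Fin d → ℝ) i ε) j (-ε)) ∈ P k := by
  obtain ⟨hIcc, hbox, hys, hts⟩ := hq
  set w := Function.update (Function.update (0 : Fin d → ℝ) i ε) j (-ε) with hw
  have hfst : (q + ((0:ℝ), w)).1 = q.1 + 0 := rfl
  have hsnd : ∀ m, (q + ((0:ℝ), w)).2 m = q.2 m + w m := fun m => rfl
  have hsum : ∑ m ∈ Finset.univ.erase k, (q + ((0:ℝ), w)).2 m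
      = ∑ m ∈ Finset.univ.erase k, q.2 m := by
    simp only [hsnd, Finset.sum_add_distrib]
    have : ∑ m ∈ Finset.univ.erase k, w m = 0 := by
      rw [hw, Finset.sum_update_of_mem (Finset.mem_erase.mpr ⟨hjk, Finset.mem_univ j⟩),
        Finset.sum_update_of_mem (Finset.mem_sdiff.mpr
          ⟨Finset.mem_erase.mpr ⟨hik, Finset.mem_univ i⟩, by simp [hij]⟩)]
      simp
    rw [this, add_zero]
  refine ⟨⟨by rw [hfst, add_zero]; exact hIcc.1, by rw [hfst, add_zero]; exact hIcc.2⟩,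
    ?_, ?_, ?_⟩
  · intro m
    rw [hsnd, hw]
    rcases eq_or_ne m j with rfl | hmj
    · rw [Function.update_apply, if_pos rfl]
      constructor <;> [linarith [h5]; linarith [h6]]
    · rcases eq_or_ne m i with rfl | hmi
      · rw [Function.update_apply, if_neg hmj, Function.update_apply, if_pos rfl]
        exact ⟨h3, h4⟩
      · rw [Function.update_apply, if_neg hmj, Function.update_apply, if_neg hmi,
          Pi.zero_apply, add_zero]
        exact hbox m
  · rw [hfst, add_zero, hsum]; exact hys
  · rw [hsum, hsnd, hw, Function.update_apply, if_neg (Ne.symm hjk), Function.update_apply,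
      if_neg (Ne.symm hik), Pi.zero_apply, add_zero]
    exact hts


lemma perturb_zero {k i : Fin d} (hik : i ≠ k) {q : ℝ × (Fin d → ℝ)}
    (hq : q ∈ (P k).extremePoints ℝ) (a bi bk : ℝ)
    (h1 : 0 ≤ q.1 + a) (h2 : q.1 + a ≤ 1) (h1' : 0 ≤ q.1 - a) (h2' : q.1 - a ≤ 1)
    (h3 : 0 ≤ q.2 i + bi) (h4 : q.2 i + bi ≤ 1) (h3' : 0 ≤ q.2 i - bi) (h4' : q.2 i - bi ≤ 1)
    (h5 : 0 ≤ q.2 k + bk) (h6 : q.2 k + bk ≤ 1) (h5' : 0 ≤ q.2 k - bk) (h6' : q.2 k - bk ≤ 1)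
    (h7 : q.1 + a ≤ (∑ m ∈ Finset.univ.erase k, q.2 m) + bi)
    (h7' : q.1 - a ≤ (∑ m ∈ Finset.univ.erase k, q.2 m) - bi)
    (h8 : q.2 k + bk ≤ (∑ m ∈ Finset.univ.erase k, q.2 m) + bi)
    (h8' : q.2 k - bk ≤ (∑ m ∈ Finset.univ.erase k, q.2 m) - bi) :
    a = 0 ∧ bi = 0 ∧ bk = 0 := by
  set w := Function.update (Function.update (0 : Fin d → ℝ) i bi) k bk with hw
  have hplus : q + (a, w) ∈ P k := mem_P_add hik hq.1 a bi bk h1 h2 h3 h4 h5 h6 h7 h8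
  have h' : q + (-a, Function.update (Function.update (0 : Fin d → ℝ) i (-bi)) k (-bk)) ∈ P k :=
    mem_P_add hik hq.1 (-a) (-bi) (-bk) (by linarith) (by linarith) (by linarith) (by linarith)
      (by linarith) (by linarith) (by linarith) (by linarith)
  rw [update_neg] at h'
  have hminus : q - (a, w) ∈ P k := by
    rw [sub_eq_add_neg]
    exact h'
  have hzero := extreme_zero hq hplus hminus
  have ha : a = 0 := congrArg Prod.fst hzero
  have hw0 : w = 0 := congrArg Prod.snd hzero
  have hbi : bi = 0 := by
    have := congrFun hw0 i
    rwa [hw, update_apply', if_neg hik, if_pos rfl, Pi.zero_apply] at this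
  have hbk : bk = 0 := by
    have := congrFun hw0 k
    rwa [hw, update_apply', if_pos rfl, Pi.zero_apply] at this
  exact ⟨ha, hbi, hbk⟩

lemma perturb2_zero {k i j : Fin d} (hik : i ≠ k) (hjk : j ≠ k) (hij : i ≠ j)
    {q : ℝ × (Fin d → ℝ)} (hq : q ∈ (P k).extremePoints ℝ) (ε : ℝ)
    (h3 : 0 ≤ q.2 i + ε) (h4 : q.2 i + ε ≤ 1) (h3' : 0 ≤ q.2 i - ε) (h4' : q.2 i - ε ≤ 1)
    (h5 : 0 ≤ q.2 j + ε) (h6 : q.2 j + ε ≤ 1) (h5' : 0 ≤ q.2 j - ε) (h6' : q.2 j - ε ≤ 1) :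
    ε = 0 := by
  set w := Function.update (Function.update (0 : Fin d → ℝ) i ε) j (-ε) with hw
  have hplus : q + ((0:ℝ), w) ∈ P k := mem_P_add2 hik hjk hij hq.1 ε h3 h4 h5' h6'
  have h' : q + ((0:ℝ), Function.update (Function.update (0 : Fin d → ℝ) i (-ε)) j (-(-ε)))
      ∈ P k := mem_P_add2 hik hjk hij hq.1 (-ε) (by linarith) (by linarith) (by linarith)
    (by linarith)
  rw [update_neg] at h'
  have hminus : q - ((0:ℝ), w) ∈ P k := by
    rw [sub_eq_add_neg, show -(((0:ℝ), w)) = ((0:ℝ), -w) by rw [Prod.neg_mk, neg_zero]]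
    exact h'
  have hzero := extreme_zero hq hplus hminus
  have hw0 : w = 0 := congrArg Prod.snd hzero
  have := congrFun hw0 i
  rwa [hw, Function.update_apply, if_neg hij, Function.update_apply, if_pos rfl,
    Pi.zero_apply] at this


lemma extreme_subset_S (hd : 2 ≤ d) (k : Fin d) : (P k).extremePoints ℝ ⊆ S k := by
  intro q hq
  obtain ⟨⟨hy0, hy1⟩, hbox, hys, hts⟩ := hq.1
  set s := ∑ m ∈ Finset.univ.erase k, q.2 m with hs
  have hs0 : 0 ≤ s := Finset.sum_nonneg fun m _ => (hbox m).1
  have : Nontrivial (Fin d) := ⟨⟨⟨0, by omega⟩, ⟨1, by omega⟩, by simp [Fin.ext_iff]⟩⟩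
  obtain ⟨i₀, hi₀⟩ := exists_ne k
  -- existence of a fractional coordinate when `s` is fractional
  have hfracex : 0 < s → s < 1 → ∃ i, i ≠ k ∧ 0 < q.2 i ∧ q.2 i < 1 := by
    intro hpos hlt
    by_contra hcon
    push_neg at hcon
    have hall : ∀ i ∈ Finset.univ.erase k, q.2 i = 0 := by
      intro i hi
      have hik := (Finset.mem_erase.mp hi).1
      rcases lt_or_ge 0 (q.2 i) with hpos' | hle
      · exfalso
        have h1 := hcon i hik hpos'
        have h2 : q.2 i ≤ s := hs ▸ Finset.single_le_sum (fun m _ => (hbox m).1) hi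
        linarith
      · exact le_antisymm hle (hbox i).1
    have := Finset.sum_eq_zero hall
    rw [← hs] at this
    linarith
  -- Step 1: the first coordinate is 0 or 1
  have hy01 : q.1 = 0 ∨ q.1 = 1 := by
    by_contra hy
    push_neg at hy
    have hy0' : 0 < q.1 := lt_of_le_of_ne hy0 (Ne.symm hy.1)
    have hy1' : q.1 < 1 := lt_of_le_of_ne hy1 hy.2
    rcases eq_or_lt_of_le hys with hey | hlty
    · have hspos : 0 < s := hey ▸ hy0'
      have hslt : s < 1 := hey ▸ hy1'
      obtain ⟨i, hik, hxi0, hxi1⟩ := hfracex hspos hslt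
      rcases eq_or_lt_of_le hts with het | hltt
      · -- y = s and t = s : move y, xᵢ, t together
        set ε := min (min q.1 (1 - q.1))
          (min (min (q.2 i) (1 - q.2 i)) (min (q.2 k) (1 - q.2 k))) with hε
        have htpos : 0 < q.2 k := by rw [het]; exact hspos
        have htlt : q.2 k < 1 := by rw [het]; exact hslt
        have hεpos : 0 < ε := lt_min (lt_min hy0' (by linarith))
          (lt_min (lt_min hxi0 (by linarith)) (lt_min htpos (by linarith)))
        have l1 : ε ≤ q.1 := (min_le_left _ _).trans (min_le_left _ _)
        have l2 : ε ≤ 1 - q.1 := (min_le_left _ _).trans (min_le_right _ _)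
        have l3 : ε ≤ q.2 i := (min_le_right _ _).trans
          ((min_le_left _ _).trans (min_le_left _ _))
        have l4 : ε ≤ 1 - q.2 i := (min_le_right _ _).trans
          ((min_le_left _ _).trans (min_le_right _ _))
        have l5 : ε ≤ q.2 k := (min_le_right _ _).trans
          ((min_le_right _ _).trans (min_le_left _ _))
        have l6 : ε ≤ 1 - q.2 k := (min_le_right _ _).trans
          ((min_le_right _ _).trans (min_le_right _ _))
        have := (perturb_zero hik hq ε ε ε (by linarith) (by linarith) (by linarith)
          (by linarith) (by linarith) (by linarith) (by linarith) (by linarith) (by linarith)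
          (by linarith) (by linarith) (by linarith) (by linarith) (by linarith) (by linarith)
          (by linarith)).1
        linarith
      · -- y = s and t < s : move y, xᵢ together
        set ε := min (min q.1 (1 - q.1))
          (min (min (q.2 i) (1 - q.2 i)) (s - q.2 k)) with hε
        have hεpos : 0 < ε := lt_min (lt_min hy0' (by linarith))
          (lt_min (lt_min hxi0 (by linarith)) (by linarith))
        have l1 : ε ≤ q.1 := (min_le_left _ _).trans (min_le_left _ _)
        have l2 : ε ≤ 1 - q.1 := (min_le_left _ _).trans (min_le_right _ _)
        have l3 : ε ≤ q.2 i := (min_le_right _ _).trans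
          ((min_le_left _ _).trans (min_le_left _ _))
        have l4 : ε ≤ 1 - q.2 i := (min_le_right _ _).trans
          ((min_le_left _ _).trans (min_le_right _ _))
        have l5 : ε ≤ s - q.2 k := (min_le_right _ _).trans (min_le_right _ _)
        have := (perturb_zero hik hq ε ε 0 (by linarith) (by linarith) (by linarith)
          (by linarith) (by linarith) (by linarith) (by linarith) (by linarith)
          (by linarith [(hbox k).1]) (by linarith [(hbox k).2]) (by linarith [(hbox k).1])
          (by linarith [(hbox k).2]) (by linarith) (by linarith) (by linarith)
          (by linarith)).1
        linarith
    · -- y < s : move y alone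
      set ε := min (min q.1 (1 - q.1)) (s - q.1) with hε
      have hεpos : 0 < ε := lt_min (lt_min hy0' (by linarith)) (by linarith)
      have l1 : ε ≤ q.1 := (min_le_left _ _).trans (min_le_left _ _)
      have l2 : ε ≤ 1 - q.1 := (min_le_left _ _).trans (min_le_right _ _)
      have l3 : ε ≤ s - q.1 := min_le_right _ _
      have := (perturb_zero hi₀ hq ε 0 0 (by linarith) (by linarith) (by linarith)
        (by linarith) (by linarith [(hbox i₀).1]) (by linarith [(hbox i₀).2])
        (by linarith [(hbox i₀).1]) (by linarith [(hbox i₀).2]) (by linarith [(hbox k).1])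
        (by linarith [(hbox k).2]) (by linarith [(hbox k).1]) (by linarith [(hbox k).2])
        (by linarith) (by linarith) (by linarith) (by linarith)).1
      linarith
  -- Step 2: coordinate k is 0 or 1
  have ht01 : q.2 k = 0 ∨ q.2 k = 1 := by
    by_contra ht
    push_neg at ht
    have ht0' : 0 < q.2 k := lt_of_le_of_ne (hbox k).1 (Ne.symm ht.1)
    have ht1' : q.2 k < 1 := lt_of_le_of_ne (hbox k).2 ht.2
    rcases eq_or_lt_of_le hts with het | hltt
    · -- t = s : s is fractional
      have hspos : 0 < s := het ▸ ht0'
      have hslt : s < 1 := het ▸ ht1'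
      obtain ⟨i, hik, hxi0, hxi1⟩ := hfracex hspos hslt
      have hyeq : q.1 = 0 := by
        rcases hy01 with h | h
        · exact h
        · exfalso; rw [h] at hys; linarith
      set ε := min (min (q.2 i) (1 - q.2 i)) (min s (1 - s)) with hε
      have hεpos : 0 < ε := lt_min (lt_min hxi0 (by linarith))
        (lt_min hspos (by linarith))
      have l3 : ε ≤ q.2 i := (min_le_left _ _).trans (min_le_left _ _)
      have l4 : ε ≤ 1 - q.2 i := (min_le_left _ _).trans (min_le_right _ _)
      have l5 : ε ≤ s := (min_le_right _ _).trans (min_le_left _ _)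
      have l6 : ε ≤ 1 - s := (min_le_right _ _).trans (min_le_right _ _)
      have := (perturb_zero hik hq 0 ε ε (by linarith) (by linarith) (by linarith)
        (by linarith) (by linarith) (by linarith) (by linarith) (by linarith)
        (by linarith) (by linarith) (by linarith) (by linarith)
        (by linarith) (by linarith) (by linarith) (by linarith)).2.1
      linarith
    · -- t < s : move x_k alone
      set ε := min (min (q.2 k) (1 - q.2 k)) (s - q.2 k) with hε
      have hεpos : 0 < ε := lt_min (lt_min ht0' (by linarith)) (by linarith)
      have l5 : ε ≤ q.2 k := (min_le_left _ _).trans (min_le_left _ _)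
      have l6 : ε ≤ 1 - q.2 k := (min_le_left _ _).trans (min_le_right _ _)
      have l7 : ε ≤ s - q.2 k := min_le_right _ _
      have := (perturb_zero hi₀ hq 0 0 ε (by linarith) (by linarith) (by linarith)
        (by linarith) (by linarith [(hbox i₀).1]) (by linarith [(hbox i₀).2])
        (by linarith [(hbox i₀).1]) (by linarith [(hbox i₀).2]) (by linarith)
        (by linarith) (by linarith) (by linarith)
        (by linarith) (by linarith) (by linarith) (by linarith)).2.2
      linarith
  -- Step 3: all other coordinates are 0 or 1
  have hx01 : ∀ i, i ≠ k → (q.2 i = 0 ∨ q.2 i = 1) := by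
    intro i hik
    by_contra hxi
    push_neg at hxi
    have hxi0 : 0 < q.2 i := lt_of_le_of_ne (hbox i).1 (Ne.symm hxi.1)
    have hxi1 : q.2 i < 1 := lt_of_le_of_ne (hbox i).2 hxi.2
    by_cases hj : ∃ j, j ≠ k ∧ j ≠ i ∧ 0 < q.2 j ∧ q.2 j < 1
    · obtain ⟨j, hjk, hji, hj0, hj1⟩ := hj
      set ε := min (min (q.2 i) (1 - q.2 i)) (min (q.2 j) (1 - q.2 j)) with hε
      have hεpos : 0 < ε := lt_min (lt_min hxi0 (by linarith)) (lt_min hj0 (by linarith))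
      have l3 : ε ≤ q.2 i := (min_le_left _ _).trans (min_le_left _ _)
      have l4 : ε ≤ 1 - q.2 i := (min_le_left _ _).trans (min_le_right _ _)
      have l5 : ε ≤ q.2 j := (min_le_right _ _).trans (min_le_left _ _)
      have l6 : ε ≤ 1 - q.2 j := (min_le_right _ _).trans (min_le_right _ _)
      have := perturb2_zero hik hjk (Ne.symm hji) hq ε (by linarith) (by linarith)
        (by linarith) (by linarith) (by linarith) (by linarith) (by linarith) (by linarith)
      linarith
    · push_neg at hj
      have hoth : ∀ j ∈ (Finset.univ.erase k).erase i, q.2 j = 0 ∨ q.2 j = 1 := by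
        intro j hjmem
        have h1 := Finset.mem_erase.mp hjmem
        have hji : j ≠ i := h1.1
        have hjk : j ≠ k := (Finset.mem_erase.mp h1.2).1
        rcases lt_or_ge 0 (q.2 j) with hp | hl
        · right
          exact le_antisymm (hbox j).2 (by
            by_contra hc
            push_neg at hc
            exact absurd (hj j hjk hji hp) (by simpa using hc))
        · left; exact le_antisymm hl (hbox j).1
      obtain ⟨n, hn⟩ := sum01_nat hoth
      have hsplit : s = q.2 i + ∑ j ∈ (Finset.univ.erase k).erase i, q.2 j := by
        rw [hs, ← Finset.add_sum_erase _ _ (Finset.mem_erase.mpr ⟨hik, Finset.mem_univ i⟩)]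
      have hrest0 : (0:ℝ) ≤ n := by exact_mod_cast Nat.zero_le n
      -- n cannot make s equal to an integer value of q.1 or q.2 k
      have hint : ∀ c : ℝ, c = 0 ∨ c = 1 → c ≠ s := by
        intro c hc hceq
        have hxin : q.2 i = c - n := by
          rw [hceq]
          linarith [hsplit, hn]
        rcases hc with rfl | rfl
        · linarith
        · have hn1 : (n:ℝ) < 1 := by linarith
          have hn0 : 0 < (n:ℝ) := by linarith
          have h1 : 0 < n := by exact_mod_cast hn0
          have h2 : (1:ℝ) ≤ n := by exact_mod_cast h1
          linarith
      have hys' : q.1 < s := lt_of_le_of_ne hys (hint _ hy01)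
      have hts' : q.2 k < s := lt_of_le_of_ne hts (hint _ ht01)
      set ε := min (min (q.2 i) (1 - q.2 i)) (min (s - q.1) (s - q.2 k)) with hε
      have hεpos : 0 < ε := lt_min (lt_min hxi0 (by linarith))
        (lt_min (by linarith) (by linarith))
      have l3 : ε ≤ q.2 i := (min_le_left _ _).trans (min_le_left _ _)
      have l4 : ε ≤ 1 - q.2 i := (min_le_left _ _).trans (min_le_right _ _)
      have l5 : ε ≤ s - q.1 := (min_le_right _ _).trans (min_le_left _ _)
      have l6 : ε ≤ s - q.2 k := (min_le_right _ _).trans (min_le_right _ _)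
      have := (perturb_zero hik hq 0 ε 0 (by linarith) (by linarith) (by linarith)
        (by linarith) (by linarith) (by linarith) (by linarith) (by linarith)
        (by linarith [(hbox k).1]) (by linarith [(hbox k).2]) (by linarith [(hbox k).1])
        (by linarith [(hbox k).2]) (by linarith) (by linarith) (by linarith)
        (by linarith)).2.1
      linarith
  refine ⟨hy01, ⟨?_, hts⟩, ?_⟩
  · intro i
    rcases eq_or_ne i k with rfl | h
    · exact ht01
    · exact hx01 i h
  · have hsum : ∑ i, q.2 i = s + q.2 k := by
      rw [hs, Finset.sum_erase_add _ _ (Finset.mem_univ k)]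
    rw [hsum]
    linarith [(hbox k).1]


lemma hull_eq (hd : 2 ≤ d) (k : Fin d) : convexHull ℝ (S k) = P k := by
  apply subset_antisymm
  · exact convexHull_min (S_subset_P k) (convex_P k)
  · have hclosed : IsClosed (convexHull ℝ (S k)) := (finite_S k).isClosed_convexHull (𝕜 := ℝ)
    have hKM := closure_convexHull_extremePoints (compact_P k) (convex_P k)
    calc P k = closure (convexHull ℝ ((P k).extremePoints ℝ)) := hKM.symm
    _ ⊆ closure (convexHull ℝ (S k)) :=
        closure_mono (convexHull_mono (extreme_subset_S hd k))
    _ = convexHull ℝ (S k) := hclosed.closure_eq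

end Delta1Aux

/-- Convex hull of `Δ₁` for the weak hierarchy set
`Z = {z ∈ {0,1}^d : z_d ≤ Σ_{i ∈ [d-1]} z_i}`. -/
theorem convexHull_Delta1_weak_hierarchy {d : ℕ} (hd : 2 ≤ d) :
    convexHull ℝ {q : ℝ × (Fin d → ℝ) |
        (q.1 = 0 ∨ q.1 = 1) ∧
        ((∀ i, q.2 i = 0 ∨ q.2 i = 1) ∧
          q.2 ⟨d - 1, by omega⟩ ≤ ∑ i ∈ Finset.univ.erase ⟨d - 1, by omega⟩, q.2 i) ∧
        q.1 ≤ ∑ i, q.2 i}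
      = {q : ℝ × (Fin d → ℝ) |
        q.1 ∈ Set.Icc (0 : ℝ) 1 ∧ (∀ i, q.2 i ∈ Set.Icc (0 : ℝ) 1) ∧
        q.1 ≤ (∑ i ∈ Finset.univ.erase ⟨d - 1, by omega⟩, q.2 i) ∧
        q.2 ⟨d - 1, by omega⟩ ≤ ∑ i ∈ Finset.univ.erase ⟨d - 1, by omega⟩, q.2 i} :=
  Delta1Aux.hull_eq hd ⟨d - 1, by omega⟩
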